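/- If (G,σ) is a best match graph, then (G,σ) contains no induced F2-graph. -/

import Mathlib

/-- A rooted (phylogenetic) tree on leaf set `V`, encoded by its hierarchy of
clusters `L(T(v))`, `v ∈ V(T)`: a rooted tree on leaf set `V` corresponds
exactly to a family of nonempty, pairwise compatible subsets of `V` containing
all singletons and `V` itself.  Together with a coloring `σ : V → M` this is a
leaf-colored tree. -/
structure PhyloTree (V : Type) where
  clusters : Set (Set V)
  compat : ∀ p ∈ clusters, ∀ q ∈ clusters, p ⊆ q ∨ q ⊆ p ∨ p ∩ q = ∅
  singleton_mem : ∀ v : V, {v} ∈ clusters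
  univ_mem : Set.univ ∈ clusters
  nonempty_mem : ∀ p ∈ clusters, p.Nonempty

namespace PhyloTree

variable {V M : Type}

/-- The cluster `L(T(lca(x,y)))` of the last common ancestor of `x` and `y`;
for inner vertices `u,v` of a tree one has `u ⪯_T v ↔ L(T(u)) ⊆ L(T(v))`. -/
def lcaSet (T : PhyloTree V) (x y : V) : Set V :=
  ⋂₀ {p : Set V | p ∈ T.clusters ∧ x ∈ p ∧ y ∈ p}

/-- `T` displays the triple `xy|z`, i.e. `lca(x,y) ≺ lca(x,z) = lca(y,z)`. -/
def Displays (T : PhyloTree V) (x y z : V) : Prop :=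
  T.lcaSet x y ⊂ T.lcaSet x z ∧ T.lcaSet x z = T.lcaSet y z

/-- `y` is a best match of `x` in the leaf-colored tree `(T,σ)`. -/
def BestMatch (T : PhyloTree V) (σ : V → M) (x y : V) : Prop :=
  σ x ≠ σ y ∧ ∀ y' : V, σ y' = σ y → T.lcaSet x y ⊆ T.lcaSet x y'

end PhyloTree

variable {V M : Type}

/-- `(T,σ)` explains `(G,σ)`, i.e. `(G,σ) = G(T,σ)`. -/
def Explains (T : PhyloTree V) (σ : V → M) (G : V → V → Prop) : Prop :=
  ∀ x y : V, G x y ↔ T.BestMatch σ x y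

/-- `(G,σ)` is a best match graph. -/
def IsBMG (G : V → V → Prop) (σ : V → M) : Prop :=
  ∃ T : PhyloTree V, Explains T σ G

/-- The triple `xy|y'` is informative for `(G,σ)`. -/
def InformativeTriple (G : V → V → Prop) (σ : V → M) (x y y' : V) : Prop :=
  x ≠ y ∧ x ≠ y' ∧ y ≠ y' ∧ σ x ≠ σ y ∧ σ y = σ y' ∧ G x y ∧ ¬ G x y'

/-- The triple `xy|y'` is forbidden for `(G,σ)`. -/
def ForbiddenTriple (G : V → V → Prop) (σ : V → M) (x y y' : V) : Prop :=
  x ≠ y ∧ x ≠ y' ∧ y ≠ y' ∧ σ x ≠ σ y ∧ σ y = σ y' ∧ G x y ∧ G x y'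

/-- `(G,σ)` is sf-colored: `σ` is proper and every vertex has an out-neighbor
of every color present in the graph other than its own. -/
def SfColored (G : V → V → Prop) (σ : V → M) : Prop :=
  (∀ x y : V, G x y → σ x ≠ σ y) ∧
  ∀ (x : V) (s : M), (∃ v : V, σ v = s) → s ≠ σ x → ∃ y : V, σ y = s ∧ G x y

/-- `(G,σ)` contains an induced F1-graph. -/
def HasF1 (G : V → V → Prop) (σ : V → M) : Prop :=
  ∃ x1 x2 y1 y2 : V,
    x1 ≠ x2 ∧ y1 ≠ y2 ∧
    σ x1 = σ x2 ∧ σ y1 = σ y2 ∧ σ x1 ≠ σ y1 ∧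
    ¬ G x1 x2 ∧ ¬ G x2 x1 ∧ ¬ G y1 y2 ∧ ¬ G y2 y1 ∧
    G x1 y1 ∧ G y2 x2 ∧ G y1 x2 ∧ ¬ G x1 y2 ∧ ¬ G y2 x1

/-- `(G,σ)` contains an induced F2-graph. -/
def HasF2 (G : V → V → Prop) (σ : V → M) : Prop :=
  ∃ x1 x2 y1 y2 : V,
    x1 ≠ x2 ∧ y1 ≠ y2 ∧
    σ x1 = σ x2 ∧ σ y1 = σ y2 ∧ σ x1 ≠ σ y1 ∧
    ¬ G x1 x2 ∧ ¬ G x2 x1 ∧ ¬ G y1 y2 ∧ ¬ G y2 y1 ∧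
    G x1 y1 ∧ G y1 x2 ∧ G x2 y2 ∧ ¬ G x1 y2

/-- `(G,σ)` contains an induced F3-graph. -/
def HasF3 (G : V → V → Prop) (σ : V → M) : Prop :=
  ∃ x1 x2 y1 y2 y3 : V,
    x1 ≠ x2 ∧ y1 ≠ y2 ∧ y1 ≠ y3 ∧ y2 ≠ y3 ∧
    σ x1 = σ x2 ∧ σ y1 = σ y2 ∧ σ y2 = σ y3 ∧ σ x1 ≠ σ y1 ∧
    ¬ G x1 x2 ∧ ¬ G x2 x1 ∧ ¬ G y1 y2 ∧ ¬ G y2 y1 ∧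
    ¬ G y1 y3 ∧ ¬ G y3 y1 ∧ ¬ G y2 y3 ∧ ¬ G y3 y2 ∧
    G x1 y1 ∧ G x2 y2 ∧ G x1 y3 ∧ G x2 y3 ∧ ¬ G x1 y2 ∧ ¬ G x2 y1

lemma lca_mem_left (T : PhyloTree V) (x y : V) : x ∈ T.lcaSet x y := by
  intro p hp; exact hp.2.1

lemma lca_mem_right (T : PhyloTree V) (x y : V) : y ∈ T.lcaSet x y := by
  intro p hp; exact hp.2.2

lemma lca_subset (T : PhyloTree V) {x y : V} {p : Set V} (hp : p ∈ T.clusters)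
    (hx : x ∈ p) (hy : y ∈ p) : T.lcaSet x y ⊆ p :=
  Set.sInter_subset_of_mem ⟨hp, hx, hy⟩

lemma lca_symm (T : PhyloTree V) (x y : V) : T.lcaSet x y = T.lcaSet y x := by
  apply Set.Subset.antisymm <;>
    · intro v hv p hp
      exact hv _ ⟨hp.1, hp.2.2, hp.2.1⟩

lemma lca_mem_clusters [Fintype V] (T : PhyloTree V) (x y : V) :
    T.lcaSet x y ∈ T.clusters := by
  set S : Set (Set V) := {p : Set V | p ∈ T.clusters ∧ x ∈ p ∧ y ∈ p} with hS
  have hfin : S.Finite := Set.toFinite S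
  have hne : S.Nonempty := ⟨Set.univ, T.univ_mem, trivial, trivial⟩
  obtain ⟨m, hm, hmin⟩ := Set.Finite.exists_minimalFor id S hfin hne
  have hmsub : ∀ p ∈ S, m ⊆ p := by
    intro p hp
    rcases T.compat m hm.1 p hp.1 with h1 | h1 | h1
    · exact h1
    · exact hmin hp h1
    · exfalso
      have : x ∈ m ∩ p := ⟨hm.2.1, hp.2.1⟩
      rw [h1] at this
      exact this
  have : T.lcaSet x y = m := by
    apply Set.Subset.antisymm
    · exact Set.sInter_subset_of_mem hm
    · intro v hv p hp
      exact hmsub p hp hv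
  rw [this]
  exact hm.1

/-- A BMG contains no induced F2-graph. -/
theorem bmg_no_F2 [Fintype V] (G : V → V → Prop) (σ : V → M)
    (h : IsBMG G σ) : ¬ HasF2 G σ := by
  obtain ⟨T, hT⟩ := h
  rintro ⟨x1, x2, y1, y2, hx12, hy12, hsx, hsy, hsxy, _, _, _, _, h11, h12, h22, hn⟩
  obtain ⟨_, sub1⟩ := (hT x1 y1).1 h11
  obtain ⟨_, sub2⟩ := (hT y1 x2).1 h12
  obtain ⟨_, sub3⟩ := (hT x2 y2).1 h22
  -- σ x1 ≠ σ y2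
  have hc : σ x1 ≠ σ y2 := hsy ▸ hsxy
  -- ¬ G x1 y2 gives a witness y' with σ y' = σ y2 and ¬ lca(x1,y2) ⊆ lca(x1,y')
  have hnb : ¬ T.BestMatch σ x1 y2 := fun hb => hn ((hT x1 y2).2 hb)
  rw [PhyloTree.BestMatch] at hnb
  push_neg at hnb
  obtain ⟨y', hy'c, hy'⟩ := hnb hc
  -- chain: y2 ∈ lca(x2,y2) ⊆ lca(x2,y1) = lca(y1,x2) ⊆ lca(y1,x1) = lca(x1,y1)
  have step1 : T.lcaSet x2 y2 ⊆ T.lcaSet x2 y1 := sub3 y1 hsy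
  have step2 : T.lcaSet y1 x2 ⊆ T.lcaSet y1 x1 := sub2 x1 hsx
  have hy2A : y2 ∈ T.lcaSet x1 y1 := by
    rw [lca_symm T x1 y1]
    apply step2
    rw [lca_symm T y1 x2]
    exact step1 (lca_mem_right T x2 y2)
  -- hence lca(x1,y2) ⊆ lca(x1,y1) ⊆ lca(x1,y'), contradiction
  have hAclus := lca_mem_clusters T x1 y1
  have hBA : T.lcaSet x1 y2 ⊆ T.lcaSet x1 y1 :=
    lca_subset T hAclus (lca_mem_left T x1 y1) hy2A
  have hAy' : T.lcaSet x1 y1 ⊆ T.lcaSet x1 y' := sub1 y' (hsy ▸ hy'c)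
  exact hy' (hBA.trans hAy')
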